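/- arXiv:2409.09962 — 9 statements merged into one kernel-verified Lean document; each statement's English description precedes it below -/
import Mathlib

section
/- Let Z = (Z₁, Z₂) be a standard bivariate normal vector, let x, y ∈ (0,1) with x² + y² = 1, and let α ∈ [0,1] with z the (1 − α/2)-quantile of the standard normal distribution. Then P(−z ≤ x·|Z₁| − y·Z₂ ≤ z) = 1 − α. -/
open MeasureTheory ProbabilityTheory Real Set

/-- Standard normal CDF. -/
noncomputable def stdNormalCDF (t : ℝ) : ℝ :=
  ((gaussianReal 0 1) (Set.Iic t)).toReal

/-- Rotation as a measurable equivalence of `ℝ × ℝ`. -/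
def rotEquiv (x y : ℝ) (hxy : x ^ 2 + y ^ 2 = 1) : ℝ × ℝ ≃ᵐ ℝ × ℝ where
  toFun p := (x * p.1 - y * p.2, y * p.1 + x * p.2)
  invFun p := (x * p.1 + y * p.2, x * p.2 - y * p.1)
  left_inv p := by
    ext
    · simp only; linear_combination p.1 * hxy
    · simp only; linear_combination p.2 * hxy
  right_inv p := by
    ext
    · simp only; linear_combination p.1 * hxy
    · simp only; linear_combination p.2 * hxy
  measurable_toFun :=
    (show Measurable fun p : ℝ × ℝ => (x * p.1 - y * p.2, y * p.1 + x * p.2) by fun_prop)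
  measurable_invFun :=
    (show Measurable fun p : ℝ × ℝ => (x * p.1 + y * p.2, x * p.2 - y * p.1) by fun_prop)

lemma shear_snd (c : ℝ) : MeasurePreserving (fun p : ℝ × ℝ => (p.1, c * p.1 + p.2))
    ((volume : Measure ℝ).prod volume) ((volume : Measure ℝ).prod volume) :=
  MeasurePreserving.skew_product (MeasurePreserving.id volume) (by fun_prop)
    (Filter.Eventually.of_forall fun a => (measurePreserving_add_left volume (c * a)).map_eq)

lemma shear_fst (c : ℝ) : MeasurePreserving (fun p : ℝ × ℝ => (c * p.2 + p.1, p.2))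
    ((volume : Measure ℝ).prod volume) ((volume : Measure ℝ).prod volume) :=
  Measure.measurePreserving_swap.comp ((shear_snd c).comp Measure.measurePreserving_swap)

lemma rot_mp (x y : ℝ) (hy : y ≠ 0) (hxy : x ^ 2 + y ^ 2 = 1) :
    MeasurePreserving (fun p : ℝ × ℝ => (x * p.1 - y * p.2, y * p.1 + x * p.2))
    ((volume : Measure ℝ).prod volume) ((volume : Measure ℝ).prod volume) := by
  have h := (shear_fst (-((1 - x)/y))).comp ((shear_snd y).comp (shear_fst (-((1 - x)/y))))
  convert h using 1
  funext p
  simp only [Function.comp_apply]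
  ext
  · simp only; field_simp; ring_nf; linear_combination (-p.2) * hxy
  · simp only; field_simp; ring_nf

lemma pdf_mul (u v u' v' : ℝ) (h : u ^ 2 + v ^ 2 = u' ^ 2 + v' ^ 2) :
    gaussianPDFReal 0 1 u * gaussianPDFReal 0 1 v
      = gaussianPDFReal 0 1 u' * gaussianPDFReal 0 1 v' := by
  simp only [gaussianPDFReal, NNReal.coe_one, mul_one, sub_zero]
  rw [mul_mul_mul_comm, ← Real.exp_add, mul_mul_mul_comm, ← Real.exp_add]
  have : -u ^ 2 / 2 + -v ^ 2 / 2 = -u' ^ 2 / 2 + -v' ^ 2 / 2 := by linarith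
  rw [this]

lemma prod_gauss_density :
    (gaussianReal 0 1).prod (gaussianReal 0 1)
      = ((volume : Measure ℝ).prod volume).withDensity
          (fun p => gaussianPDF 0 1 p.1 * gaussianPDF 0 1 p.2) := by
  refine Measure.prod_eq fun s t hs ht => ?_
  rw [withDensity_apply _ (hs.prod ht), ← Measure.prod_restrict,
    lintegral_prod_mul (measurable_gaussianPDF 0 1).aemeasurable
      (measurable_gaussianPDF 0 1).aemeasurable,
    gaussianReal_apply 0 one_ne_zero s, gaussianReal_apply 0 one_ne_zero t]

lemma gauss_neg : Measure.map (fun t : ℝ => -t) (gaussianReal 0 1) = gaussianReal 0 1 := by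
  have h := gaussianReal_map_const_mul (μ := 0) (v := 1) (-1)
  simp only [neg_one_mul, mul_zero] at h
  convert h using 2
  norm_num

/-- Lemma 2: if (Z₁, Z₂) is standard bivariate normal, x, y ∈ (0,1) with x² + y² = 1,
α ∈ [0,1] and z is the 1 − α/2 standard normal quantile, then
P(−z ≤ x|Z₁| − yZ₂ ≤ z) = 1 − α. -/
theorem stmt0 (x y α z : ℝ)
    (hx : x ∈ Set.Ioo (0:ℝ) 1) (hy : y ∈ Set.Ioo (0:ℝ) 1)
    (hxy : x ^ 2 + y ^ 2 = 1) (hα : α ∈ Set.Icc (0:ℝ) 1)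
    (hz : stdNormalCDF z = 1 - α / 2) :
    (((gaussianReal 0 1).prod (gaussianReal 0 1))
      {p : ℝ × ℝ | -z ≤ x * |p.1| - y * p.2 ∧ x * |p.1| - y * p.2 ≤ z}).toReal
      = 1 - α := by
  obtain ⟨hx0, hx1⟩ := hx
  obtain ⟨hy0, hy1⟩ := hy
  obtain ⟨hα0, hα1⟩ := hα
  have hy0' : y ≠ 0 := ne_of_gt hy0
  set γ := gaussianReal 0 1 with hγ
  simp only [stdNormalCDF, ← hγ] at hz
  -- basic facts about γ
  have hatom : ∀ t : ℝ, γ {t} = 0 := fun t =>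
    gaussianReal_absolutelyContinuous 0 one_ne_zero Real.volume_singleton
  haveI : NoAtoms γ := ⟨hatom⟩
  have hneg : Measure.map (fun t : ℝ => -t) γ = γ := gauss_neg
  have hnegIcc : ∀ u v : ℝ, γ (Icc u v) = γ (Icc (-v) (-u)) := by
    intro u v
    conv_lhs => rw [← hneg]
    rw [Measure.map_apply measurable_neg measurableSet_Icc]
    congr 1
    ext b
    simp only [mem_preimage, mem_Icc]
    constructor <;> intro h <;> constructor <;> linarith [h.1, h.2]
  have hsymm : ∀ t : ℝ, γ (Iic (-t)) = γ (Ici t) := by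
    intro t
    conv_rhs => rw [← hneg]
    rw [Measure.map_apply measurable_neg measurableSet_Ici]
    congr 1
    ext b
    simp only [mem_preimage, mem_Ici, mem_Iic]
    constructor <;> intro h <;> linarith
  have hcompl : ∀ t : ℝ, γ (Ioi t) = 1 - γ (Iic t) := by
    intro t
    rw [← Set.compl_Iic, measure_compl measurableSet_Iic (measure_ne_top _ _), measure_univ]
  have hIoiIci : ∀ t : ℝ, γ (Ioi t) = γ (Ici t) := fun t => measure_congr (Ioi_ae_eq_Ici' (hatom t))
  have hIicNeg : (γ (Iic (-z))).toReal = α / 2 := by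
    rw [hsymm z, ← hIoiIci z, hcompl z,
      ENNReal.toReal_sub_of_le prob_le_one ENNReal.one_ne_top, ENNReal.toReal_one, hz]
    ring
  -- z is nonnegative
  have hz0 : 0 ≤ z := by
    by_contra h
    push_neg at h
    have h10 : (γ (Iic 0)).toReal = 1 / 2 := by
      have h1 : γ (Iic 0) = γ (Ici 0) := by rw [← hsymm 0, neg_zero]
      have h2 : (γ (Ioi 0)).toReal = 1 - (γ (Iic 0)).toReal := by
        rw [hcompl 0, ENNReal.toReal_sub_of_le prob_le_one ENNReal.one_ne_top,
          ENNReal.toReal_one]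
      rw [hIoiIci 0, ← h1] at h2
      linarith
    have hdiff := measure_diff (Iic_subset_Iic.mpr h.le)
      measurableSet_Iic.nullMeasurableSet (measure_ne_top γ _)
    rw [Set.Iic_sdiff_Iic] at hdiff
    have hle : γ (Iic z) ≤ γ (Iic 0) := measure_mono (Iic_subset_Iic.mpr h.le)
    have htr : (γ (Ioc z 0)).toReal = (γ (Iic 0)).toReal - (γ (Iic z)).toReal := by
      rw [hdiff, ENNReal.toReal_sub_of_le hle (measure_ne_top _ _)]
    have hpos : 0 < (γ (Ioc z 0)).toReal := by
      refine ENNReal.toReal_pos (fun h0 => ?_) (measure_ne_top _ _)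
      have : (volume : Measure ℝ) (Ioc z 0) = 0 :=
        gaussianReal_absolutelyContinuous' 0 one_ne_zero h0
      rw [Real.volume_Ioc] at this
      simp only [ENNReal.ofReal_eq_zero] at this
      linarith
    rw [htr, h10, hz] at hpos
    linarith
  -- measurability of the two sets
  have hfabs : Measurable fun p : ℝ × ℝ => x * |p.1| - y * p.2 := by fun_prop
  have hflin : Measurable fun p : ℝ × ℝ => x * p.1 - y * p.2 := by fun_prop
  have hS : MeasurableSet {p : ℝ × ℝ | -z ≤ x * |p.1| - y * p.2 ∧ x * |p.1| - y * p.2 ≤ z} := by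
    have : {p : ℝ × ℝ | -z ≤ x * |p.1| - y * p.2 ∧ x * |p.1| - y * p.2 ≤ z}
        = (fun p : ℝ × ℝ => x * |p.1| - y * p.2) ⁻¹' (Icc (-z) z) := by
      ext p; simp [mem_Icc]
    rw [this]; exact hfabs measurableSet_Icc
  have hS' : MeasurableSet {p : ℝ × ℝ | -z ≤ x * p.1 - y * p.2 ∧ x * p.1 - y * p.2 ≤ z} := by
    have : {p : ℝ × ℝ | -z ≤ x * p.1 - y * p.2 ∧ x * p.1 - y * p.2 ≤ z}
        = (fun p : ℝ × ℝ => x * p.1 - y * p.2) ⁻¹' (Icc (-z) z) := by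
      ext p; simp [mem_Icc]
    rw [this]; exact hflin measurableSet_Icc
  -- fibers are intervals
  have fib : ∀ t : ℝ, {b : ℝ | -z ≤ x * t - y * b ∧ x * t - y * b ≤ z}
      = Icc ((x * t - z) / y) ((x * t + z) / y) := by
    intro t
    ext b
    simp only [mem_setOf_eq, mem_Icc, div_le_iff₀ hy0, le_div_iff₀ hy0]
    constructor <;> rintro ⟨h1, h2⟩ <;> constructor <;> nlinarith
  -- Step A : replace |p.1| by p.1
  have hA : γ.prod γ {p : ℝ × ℝ | -z ≤ x * |p.1| - y * p.2 ∧ x * |p.1| - y * p.2 ≤ z}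
      = γ.prod γ {p : ℝ × ℝ | -z ≤ x * p.1 - y * p.2 ∧ x * p.1 - y * p.2 ≤ z} := by
    rw [Measure.prod_apply hS, Measure.prod_apply hS']
    refine lintegral_congr fun a => ?_
    have e1 : (Prod.mk a ⁻¹'
        {p : ℝ × ℝ | -z ≤ x * |p.1| - y * p.2 ∧ x * |p.1| - y * p.2 ≤ z})
        = Icc ((x * |a| - z) / y) ((x * |a| + z) / y) := fib |a|
    have e2 : (Prod.mk a ⁻¹'
        {p : ℝ × ℝ | -z ≤ x * p.1 - y * p.2 ∧ x * p.1 - y * p.2 ≤ z})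
        = Icc ((x * a - z) / y) ((x * a + z) / y) := fib a
    rw [e1, e2]
    rcases le_or_gt 0 a with ha | ha
    · rw [abs_of_nonneg ha]
    · rw [abs_of_neg ha, hnegIcc ((x * a - z) / y) ((x * a + z) / y)]
      congr 1 <;> field_simp <;> ring
  -- Step B : rotation invariance
  have hT : {p : ℝ × ℝ | -z ≤ x * p.1 - y * p.2 ∧ x * p.1 - y * p.2 ≤ z}
      = (fun p : ℝ × ℝ => (x * p.1 - y * p.2, y * p.1 + x * p.2)) ⁻¹'
        (Icc (-z) z ×ˢ (univ : Set ℝ)) := by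
    ext p
    simp [mem_Icc]
  have hTmeas : MeasurableSet (Icc (-z) z ×ˢ (univ : Set ℝ)) :=
    measurableSet_Icc.prod MeasurableSet.univ
  have Feq : ∀ p : ℝ × ℝ,
      gaussianPDF 0 1 (x * p.1 - y * p.2) * gaussianPDF 0 1 (y * p.1 + x * p.2)
        = gaussianPDF 0 1 p.1 * gaussianPDF 0 1 p.2 := by
    intro p
    simp only [gaussianPDF]
    rw [← ENNReal.ofReal_mul (gaussianPDFReal_nonneg _ _ _),
      ← ENNReal.ofReal_mul (gaussianPDFReal_nonneg _ _ _)]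
    exact congrArg _ (pdf_mul _ _ _ _ (by linear_combination (p.1 ^ 2 + p.2 ^ 2) * hxy))
  have hB : γ.prod γ {p : ℝ × ℝ | -z ≤ x * p.1 - y * p.2 ∧ x * p.1 - y * p.2 ≤ z}
      = γ (Icc (-z) z) := by
    rw [hT, hγ, prod_gauss_density,
      withDensity_apply _ ((rot_mp x y hy0' hxy).measurable hTmeas)]
    calc ∫⁻ p in (fun p : ℝ × ℝ => (x * p.1 - y * p.2, y * p.1 + x * p.2)) ⁻¹'
          (Icc (-z) z ×ˢ (univ : Set ℝ)),
            gaussianPDF 0 1 p.1 * gaussianPDF 0 1 p.2 ∂(volume : Measure ℝ).prod volume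
        = ∫⁻ p in (fun p : ℝ × ℝ => (x * p.1 - y * p.2, y * p.1 + x * p.2)) ⁻¹'
          (Icc (-z) z ×ˢ (univ : Set ℝ)),
            gaussianPDF 0 1 (x * p.1 - y * p.2) * gaussianPDF 0 1 (y * p.1 + x * p.2)
            ∂(volume : Measure ℝ).prod volume := by
          exact lintegral_congr fun p => (Feq p).symm
      _ = ∫⁻ q in Icc (-z) z ×ˢ (univ : Set ℝ),
            gaussianPDF 0 1 q.1 * gaussianPDF 0 1 q.2 ∂(volume : Measure ℝ).prod volume :=
          (rot_mp x y hy0' hxy).setLIntegral_comp_preimage_emb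
            (rotEquiv x y hxy).measurableEmbedding
            (fun q : ℝ × ℝ => gaussianPDF 0 1 q.1 * gaussianPDF 0 1 q.2)
            (Icc (-z) z ×ˢ (univ : Set ℝ))
      _ = ((volume : Measure ℝ).prod volume).withDensity
            (fun p => gaussianPDF 0 1 p.1 * gaussianPDF 0 1 p.2)
            (Icc (-z) z ×ˢ (univ : Set ℝ)) := (withDensity_apply _ hTmeas).symm
      _ = (gaussianReal 0 1).prod (gaussianReal 0 1) (Icc (-z) z ×ˢ (univ : Set ℝ)) := by
          rw [prod_gauss_density]
      _ = gaussianReal 0 1 (Icc (-z) z) := by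
          rw [Measure.prod_prod, measure_univ, mul_one]
  -- Step C : compute the Gaussian probability of [-z, z]
  have hnegle : -z ≤ z := by linarith
  have hdiff := measure_diff (Iic_subset_Iic.mpr hnegle)
    measurableSet_Iic.nullMeasurableSet (measure_ne_top γ _)
  rw [Set.Iic_sdiff_Iic] at hdiff
  have hIccIoc : γ (Icc (-z) z) = γ (Ioc (-z) z) := (measure_congr (Ioc_ae_eq_Icc' (hatom _))).symm
  have hle : γ (Iic (-z)) ≤ γ (Iic z) := measure_mono (Iic_subset_Iic.mpr hnegle)
  rw [hA, hB, hIccIoc, hdiff,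
    ENNReal.toReal_sub_of_le hle (measure_ne_top _ _), hz, hIicNeg]
  ring
end

section
/- Let f : ℝ → ℝ be Borel measurable and bounded, and suppose there exists w̄ ≤ 0 such that f is nondecreasing through w̄ (i.e., f(w) ≤ f(w̄) for all w ≤ w̄ and f(w) ≥ f(w̄) for all w ≥ w̄). Let W ~ N(0,1). If f(w̄) = E[f(W)], then for all μ ≥ 0, E[f(W + μ)] ≥ E[f(W)]. -/
open MeasureTheory ProbabilityTheory

lemma gauss_integral_eq (m : ℝ) (g : ℝ → ℝ) :
    ∫ w, g w ∂(gaussianReal m 1) = ∫ w, gaussianPDFReal m 1 w * g w := by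
  rw [gaussianReal_of_var_ne_zero m one_ne_zero]
  have : gaussianPDF m 1 = fun x => ((gaussianPDFReal m 1 x).toNNReal : ENNReal) := by
    ext x
    simp [gaussianPDF, ENNReal.ofReal]
  rw [this, integral_withDensity_eq_integral_smul
    (by exact (measurable_gaussianPDFReal m 1).real_toNNReal) g]
  congr 1
  ext x
  simp [NNReal.smul_def, Real.coe_toNNReal _ (gaussianPDFReal_nonneg m 1 x)]

lemma gauss_pdf_shift (μ x : ℝ) :
    gaussianPDFReal μ 1 x = gaussianPDFReal 0 1 x * Real.exp (μ * x - μ^2/2) := by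
  simp only [gaussianPDFReal, NNReal.coe_one, mul_one, sub_zero]
  rw [mul_assoc, ← Real.exp_add]
  congr 2
  ring

/-- Translation Lemma: if f is Borel measurable, bounded, nondecreasing through some
w̄ ≤ 0, and f(w̄) = E[f(W)] for W standard normal, then E[f(W + μ)] ≥ E[f(W)]
for all μ ≥ 0. -/
theorem stmt2 (f : ℝ → ℝ) (wbar : ℝ)
    (hf_meas : Measurable f) (hf_bdd : ∃ C, ∀ w, |f w| ≤ C)
    (hwbar : wbar ≤ 0)
    (hmono₁ : ∀ w ≤ wbar, f w ≤ f wbar)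
    (hmono₂ : ∀ w, wbar ≤ w → f wbar ≤ f w)
    (hq : f wbar = ∫ w, f w ∂(gaussianReal 0 1)) :
    ∀ μ ≥ (0:ℝ),
      (∫ w, f w ∂(gaussianReal 0 1)) ≤ ∫ w, f (w + μ) ∂(gaussianReal 0 1) := by
  intro μ hμ
  obtain ⟨C, hC⟩ := hf_bdd
  set P0 : ℝ → ℝ := gaussianPDFReal 0 1 with hP0
  set Pμ : ℝ → ℝ := gaussianPDFReal μ 1 with hPμ
  set L : ℝ → ℝ := fun x => Real.exp (μ * x - μ^2/2) with hL
  set c : ℝ := f wbar with hc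
  set k : ℝ := L wbar with hk
  -- shift identity
  have hshift : ∫ w, f (w + μ) ∂(gaussianReal 0 1) = ∫ w, f w ∂(gaussianReal μ 1) := by
    have hmap := gaussianReal_map_add_const (μ := 0) (v := 1) μ
    rw [zero_add] at hmap
    rw [← hmap, integral_map (measurable_add_const μ).aemeasurable
      hf_meas.aestronglyMeasurable]
  rw [hshift, gauss_integral_eq 0 f, gauss_integral_eq μ f]
  have hq' : c = ∫ x, P0 x * f x := by rw [hq]; exact gauss_integral_eq 0 f
  -- integrability
  have hint : ∀ m : ℝ, Integrable (fun x => gaussianPDFReal m 1 x * f x) := by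
    intro m
    have := (integrable_gaussianPDFReal m 1).bdd_mul hf_meas.aestronglyMeasurable
      (c := C) (Filter.Eventually.of_forall fun x => by simpa using hC x)
    simpa [mul_comm] using this
  have iP0f : Integrable (fun x => P0 x * f x) := hint 0
  have iPμf : Integrable (fun x => Pμ x * f x) := hint μ
  have iP0 : Integrable P0 := integrable_gaussianPDFReal 0 1
  have iPμ : Integrable Pμ := integrable_gaussianPDFReal μ 1
  -- pointwise nonnegativity
  have hnonneg : ∀ x, 0 ≤ (f x - c) * (Pμ x - k * P0 x) := by
    intro x
    have hPfact : Pμ x - k * P0 x = P0 x * (L x - L wbar) := by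
      rw [hPμ, hP0, gauss_pdf_shift μ x]; ring
    rw [hPfact]
    have hPn : 0 ≤ P0 x := gaussianPDFReal_nonneg 0 1 x
    rcases le_total x wbar with hx | hx
    · have h1 : f x - c ≤ 0 := sub_nonpos.mpr (hmono₁ x hx)
      have h2 : L x ≤ L wbar := by
        apply Real.exp_le_exp.mpr
        have := mul_le_mul_of_nonneg_left hx hμ
        linarith
      have := mul_nonneg (neg_nonneg.2 h1) (mul_nonneg hPn (sub_nonneg.2 h2))
      nlinarith [this]
    · have h1 : 0 ≤ f x - c := sub_nonneg.mpr (hmono₂ x hx)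
      have h2 : L wbar ≤ L x := by
        apply Real.exp_le_exp.mpr
        have := mul_le_mul_of_nonneg_left hx hμ
        linarith
      exact mul_nonneg h1 (mul_nonneg hPn (sub_nonneg.2 h2))
  -- integral of the nonnegative function
  have key : 0 ≤ ∫ x, (f x - c) * (Pμ x - k * P0 x) :=
    integral_nonneg hnonneg
  have hexp : (fun x => (f x - c) * (Pμ x - k * P0 x))
      = fun x => (Pμ x * f x - k * (P0 x * f x)) - (c * Pμ x - (c * k) * P0 x) := by
    ext x; ring
  have iA : Integrable (fun x => Pμ x * f x - k * (P0 x * f x)) := iPμf.sub (iP0f.const_mul k)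
  have iB : Integrable (fun x => c * Pμ x - (c * k) * P0 x) :=
    (iPμ.const_mul c).sub (iP0.const_mul (c*k))
  rw [hexp, integral_sub iA iB, integral_sub iPμf (iP0f.const_mul k),
    integral_sub (iPμ.const_mul c) (iP0.const_mul (c*k)),
    integral_const_mul, integral_const_mul, integral_const_mul] at key
  have h10 : ∫ x, P0 x = 1 := integral_gaussianPDFReal_eq_one 0 one_ne_zero
  have h1μ : ∫ x, Pμ x = 1 := integral_gaussianPDFReal_eq_one μ one_ne_zero
  rw [h10, h1μ, ← hq'] at key
  have goal0 : ∫ w, P0 w * f w = c := hq'.symm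
  show (∫ w, P0 w * f w) ≤ ∫ w, Pμ w * f w
  rw [goal0]
  linarith
end

section
/- Define g(μ) = E[f(W + μ)] − q, where W ~ N(0,1), f : ℝ → ℝ is Borel measurable and bounded, q = E[f(W)], and f is nondecreasing through w̄ with f(w̄) = q. Then for every μ, the derivative satisfies g'(μ) ≥ (w̄ − μ)·g(μ). -/
open MeasureTheory ProbabilityTheory Real
open scoped NNReal ENNReal

noncomputable def pdf0 (t : ℝ) : ℝ := gaussianPDFReal 0 1 t

lemma pdf0_eq (t : ℝ) : pdf0 t = (Real.sqrt (2 * π))⁻¹ * Real.exp (-t ^ 2 / 2) := by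
  simp [pdf0, gaussianPDFReal]

lemma pdf0_nonneg (t : ℝ) : 0 ≤ pdf0 t := gaussianPDFReal_nonneg 0 1 t

lemma pdf0_meas : Measurable pdf0 := measurable_gaussianPDFReal 0 1

lemma pdf0_even (t : ℝ) : pdf0 (-t) = pdf0 t := by
  simp [pdf0_eq]

lemma c_nonneg : (0:ℝ) ≤ (Real.sqrt (2 * π))⁻¹ := by positivity

lemma key_bound (t : ℝ) : |t| * Real.exp (-t ^ 2 / 2) ≤ Real.exp (-t ^ 2 / 4) := by
  have h1 : |t| ≤ Real.exp (t ^ 2 / 4) := by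
    have h2 : |t| ≤ 1 + t ^ 2 / 4 := by
      nlinarith [sq_abs t, sq_nonneg (|t| - 2)]
    exact h2.trans (by linarith [Real.add_one_le_exp (t ^ 2 / 4)])
  calc |t| * Real.exp (-t ^ 2 / 2) ≤ Real.exp (t ^ 2 / 4) * Real.exp (-t ^ 2 / 2) :=
        mul_le_mul_of_nonneg_right h1 (Real.exp_nonneg _)
    _ = Real.exp (-t ^ 2 / 4) := by rw [← Real.exp_add]; ring_nf

lemma pdf0_mul_bound (t : ℝ) :
    |t * pdf0 t| ≤ (Real.sqrt (2 * π))⁻¹ * Real.exp (-t ^ 2 / 4) := by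
  rw [pdf0_eq, abs_mul, abs_mul]
  rw [abs_of_nonneg c_nonneg, abs_of_nonneg (Real.exp_nonneg _)]
  calc |t| * ((Real.sqrt (2 * π))⁻¹ * Real.exp (-t ^ 2 / 2))
      = (Real.sqrt (2 * π))⁻¹ * (|t| * Real.exp (-t ^ 2 / 2)) := by ring
    _ ≤ (Real.sqrt (2 * π))⁻¹ * Real.exp (-t ^ 2 / 4) :=
        mul_le_mul_of_nonneg_left (key_bound t) c_nonneg

lemma integrable_exp_quarter (b : ℝ) (hb : 0 < b) (μ : ℝ) :
    Integrable (fun x : ℝ => Real.exp (-(x - μ) ^ 2 * b)) := by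
  have := integrable_exp_neg_mul_sq hb
  have h := this.comp_sub_right μ
  refine h.congr (Filter.Eventually.of_forall fun x => ?_)
  ring_nf

lemma integrable_pdf0_shift (μ : ℝ) : Integrable (fun x : ℝ => pdf0 (x - μ)) := by
  have := integrable_gaussianPDFReal 0 1
  exact this.comp_sub_right μ

lemma integrable_mul_pdf0_shift (μ : ℝ) :
    Integrable (fun x : ℝ => (x - μ) * pdf0 (x - μ)) := by
  have hi : Integrable (fun x : ℝ => (Real.sqrt (2 * π))⁻¹ * Real.exp (-(x - μ) ^ 2 * (1/4))) :=
    (integrable_exp_quarter (1/4) (by norm_num) μ).const_mul _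
  refine hi.mono ?_ (Filter.Eventually.of_forall fun x => ?_)
  · exact ((measurable_id.sub_const μ).mul (pdf0_meas.comp (measurable_id.sub_const μ))).aestronglyMeasurable
  · have := pdf0_mul_bound (x - μ)
    simp only [Real.norm_eq_abs]
    refine this.trans ?_
    rw [abs_of_nonneg (by positivity)]
    refine mul_le_mul_of_nonneg_left (le_of_eq ?_) c_nonneg
    ring_nf

lemma integral_mul_pdf0_shift (μ : ℝ) : ∫ x : ℝ, (x - μ) * pdf0 (x - μ) = 0 := by
  have h1 : ∫ x : ℝ, (x - μ) * pdf0 (x - μ) = ∫ t : ℝ, t * pdf0 t :=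
    integral_sub_right_eq_self (fun t => t * pdf0 t) μ
  rw [h1]
  have h2 : ∫ t : ℝ, t * pdf0 t = ∫ t : ℝ, (-t) * pdf0 (-t) := (integral_neg_eq_self _ _).symm
  have h3 : ∫ t : ℝ, (-t) * pdf0 (-t) = - ∫ t : ℝ, t * pdf0 t := by
    rw [← integral_neg]
    congr 1 with t
    rw [pdf0_even]; ring
  linarith [h2, h3]

lemma integral_pdf0_shift (μ : ℝ) : ∫ x : ℝ, pdf0 (x - μ) = 1 := by
  have h1 : ∫ x : ℝ, pdf0 (x - μ) = ∫ t : ℝ, pdf0 t :=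
    integral_sub_right_eq_self pdf0 μ
  rw [h1]
  exact integral_gaussianPDFReal_eq_one 0 one_ne_zero

lemma hasDerivAt_pdf0 (x μ : ℝ) :
    HasDerivAt (fun m => pdf0 (x - m)) ((x - μ) * pdf0 (x - μ)) μ := by
  have h1 : HasDerivAt (fun m : ℝ => -(x - m) ^ 2 / 2) (x - μ) μ := by
    have h2 := ((hasDerivAt_id μ).const_sub x).pow 2
    have h3 := h2.neg.div_const 2
    refine h3.congr_deriv ?_
    simp only [id_eq]
    push_cast
    ring
  have h4 := (h1.exp).const_mul ((Real.sqrt (2 * π))⁻¹)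
  refine HasDerivAt.congr_deriv (h4.congr_of_eventuallyEq ?_) ?_
  · filter_upwards with m; rw [pdf0_eq]
  · rw [pdf0_eq]; ring

lemma gaussian_integral_conv (f : ℝ → ℝ) (hf_meas : Measurable f) (μ : ℝ) :
    ∫ w, f (w + μ) ∂(gaussianReal 0 1) = ∫ x : ℝ, f x * pdf0 (x - μ) := by
  have hmap : (gaussianReal 0 1).map (· + μ) = gaussianReal μ 1 := by
    rw [gaussianReal_map_add_const μ, zero_add]
  have h1 : ∫ w, f (w + μ) ∂(gaussianReal 0 1) = ∫ x, f x ∂(gaussianReal μ 1) := by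
    rw [← hmap]
    exact (integral_map (φ := fun w => w + μ) (by fun_prop)
      hf_meas.aestronglyMeasurable).symm
  rw [h1, gaussianReal_of_var_ne_zero μ one_ne_zero]
  have hd : (gaussianPDF μ 1) = fun x => ((Real.toNNReal (gaussianPDFReal μ 1 x) : ℝ≥0) : ENNReal) := by
    funext x; rfl
  rw [hd, integral_withDensity_eq_integral_smul (by
    exact (measurable_gaussianPDFReal μ 1).real_toNNReal) f]
  congr 1 with x
  have hx : gaussianPDFReal 0 1 (x - μ) = gaussianPDFReal (0 + μ) 1 x := gaussianPDFReal_sub x μ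
  rw [NNReal.smul_def, smul_eq_mul, Real.coe_toNNReal _ (gaussianPDFReal_nonneg μ 1 x), pdf0, hx,
    zero_add, mul_comm]

/-- Differential inequality step: with g(μ) = E[f(W + μ)] − q, q = E[f(W)],
f Borel measurable and bounded, f nondecreasing through w̄ with f(w̄) = q,
the derivative of g satisfies g'(μ) ≥ (w̄ − μ)·g(μ) for every μ. -/
theorem stmt3 (f : ℝ → ℝ) (wbar q : ℝ) (g : ℝ → ℝ)
    (hf_meas : Measurable f) (hf_bdd : ∃ C, ∀ w, |f w| ≤ C)
    (hmono₁ : ∀ w ≤ wbar, f w ≤ f wbar)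
    (hmono₂ : ∀ w, wbar ≤ w → f wbar ≤ f w)
    (hq : q = ∫ w, f w ∂(gaussianReal 0 1))
    (hfw : f wbar = q)
    (hg : ∀ μ, g μ = (∫ w, f (w + μ) ∂(gaussianReal 0 1)) - q) :
    ∀ μ : ℝ, DifferentiableAt ℝ g μ ∧ (wbar - μ) * g μ ≤ deriv g μ := by
  obtain ⟨C, hC⟩ := hf_bdd
  have hC0 : 0 ≤ C := (abs_nonneg (f 0)).trans (hC 0)
  intro μ₀
  set F : ℝ → ℝ → ℝ := fun μ x => f x * pdf0 (x - μ) with hF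
  set F' : ℝ → ℝ → ℝ := fun μ x => f x * ((x - μ) * pdf0 (x - μ)) with hF'
  -- g in Lebesgue form
  have hgL : ∀ μ, g μ = (∫ x : ℝ, F μ x) - q := fun μ => by
    rw [hg μ, gaussian_integral_conv f hf_meas μ]
  -- dominating bound
  set bound : ℝ → ℝ := fun x =>
    C * ((Real.sqrt (2 * π))⁻¹ * (Real.exp (1/4) * Real.exp (-(x - μ₀) ^ 2 * (1/8)))) with hbd
  have hbound_int : Integrable bound :=
    ((((integrable_exp_quarter (1/8) (by norm_num) μ₀).const_mul _).const_mul _).const_mul _)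
  have h_bound : ∀ᵐ x : ℝ, ∀ μ' ∈ Metric.ball μ₀ 1, ‖F' μ' x‖ ≤ bound x := by
    refine Filter.Eventually.of_forall fun x => fun μ' hμ' => ?_
    have hd : |μ' - μ₀| < 1 := by
      rw [Metric.mem_ball, Real.dist_eq] at hμ'; exact hμ'
    have h1 : ‖F' μ' x‖ ≤ C * ((Real.sqrt (2 * π))⁻¹ * Real.exp (-(x - μ') ^ 2 / 4)) := by
      show ‖f x * ((x - μ') * pdf0 (x - μ'))‖ ≤ _
      rw [Real.norm_eq_abs, abs_mul]
      exact mul_le_mul (hC x) (pdf0_mul_bound (x - μ')) (abs_nonneg _) hC0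
    refine h1.trans ?_
    rw [hbd]
    have h2 : Real.exp (-(x - μ') ^ 2 / 4) ≤ Real.exp (1/4) * Real.exp (-(x - μ₀) ^ 2 * (1/8)) := by
      rw [← Real.exp_add]
      refine Real.exp_le_exp.mpr ?_
      nlinarith [sq_nonneg (μ' - μ₀), sq_nonneg ((x - μ₀) - 2 * (μ' - μ₀)), sq_abs (μ' - μ₀),
        abs_nonneg (μ' - μ₀), hd.le]
    have := mul_le_mul_of_nonneg_left h2 c_nonneg
    exact mul_le_mul_of_nonneg_left this hC0
  have hF_meas : ∀ᶠ μ' in nhds μ₀, AEStronglyMeasurable (F μ') (volume : Measure ℝ) := by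
    refine Filter.Eventually.of_forall fun μ' => ?_
    exact (hf_meas.mul (pdf0_meas.comp (measurable_id.sub_const μ'))).aestronglyMeasurable
  have hF_int : Integrable (F μ₀) :=
    (integrable_pdf0_shift μ₀).bdd_mul hf_meas.aestronglyMeasurable (Filter.Eventually.of_forall fun x => hC x)
  have hF'_meas : AEStronglyMeasurable (F' μ₀) (volume : Measure ℝ) :=
    (hf_meas.mul ((measurable_id.sub_const μ₀).mul
      (pdf0_meas.comp (measurable_id.sub_const μ₀)))).aestronglyMeasurable
  have h_diff : ∀ᵐ x : ℝ, ∀ μ' ∈ Metric.ball μ₀ 1, HasDerivAt (fun μ => F μ x) (F' μ' x) μ' := by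
    refine Filter.Eventually.of_forall fun x => fun μ' _ => ?_
    exact (hasDerivAt_pdf0 x μ').const_mul (f x)
  obtain ⟨hF'_int, hderiv⟩ := hasDerivAt_integral_of_dominated_loc_of_deriv_le
    (Metric.ball_mem_nhds μ₀ one_pos) hF_meas hF_int hF'_meas h_bound hbound_int h_diff
  -- derivative of g
  have hgd : HasDerivAt g (∫ x : ℝ, F' μ₀ x) μ₀ := by
    have := hderiv.sub_const q
    refine this.congr_of_eventuallyEq ?_
    filter_upwards with μ; rw [hgL μ]
  have hderiv_val : deriv g μ₀ = ∫ x : ℝ, F' μ₀ x := hgd.deriv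
  refine ⟨hgd.differentiableAt, ?_⟩
  rw [hderiv_val]
  -- integrability facts
  have hfq_bdd : ∃ B, ∀ x : ℝ, ‖f x - q‖ ≤ B :=
    ⟨C + |q|, fun x => (abs_sub (f x) q).trans (add_le_add_left (hC x) _)⟩
  have hint1 : Integrable (fun x : ℝ => (f x - q) * pdf0 (x - μ₀)) :=
    (integrable_pdf0_shift μ₀).bdd_mul (hf_meas.sub measurable_const).aestronglyMeasurable (Filter.Eventually.of_forall hfq_bdd.choose_spec)
  have hint2 : Integrable (fun x : ℝ => (x - μ₀) * pdf0 (x - μ₀)) := integrable_mul_pdf0_shift μ₀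
  have hintH : Integrable (fun x : ℝ => (f x - q) * ((x - wbar) * pdf0 (x - μ₀))) := by
    have hintw : Integrable (fun x : ℝ => (x - wbar) * pdf0 (x - μ₀)) := by
      have : Integrable (fun x : ℝ => (x - μ₀) * pdf0 (x - μ₀) + (μ₀ - wbar) * pdf0 (x - μ₀)) :=
        hint2.add ((integrable_pdf0_shift μ₀).const_mul _)
      refine this.congr (Filter.Eventually.of_forall fun x => ?_)
      ring
    exact hintw.bdd_mul (hf_meas.sub measurable_const).aestronglyMeasurable (Filter.Eventually.of_forall hfq_bdd.choose_spec)
  -- g μ₀ = ∫ (f x - q) pdf0 (x - μ₀)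
  have hgval : g μ₀ = ∫ x : ℝ, (f x - q) * pdf0 (x - μ₀) := by
    rw [hgL μ₀]
    have : ∫ x : ℝ, (f x - q) * pdf0 (x - μ₀)
        = (∫ x : ℝ, F μ₀ x) - ∫ x : ℝ, q * pdf0 (x - μ₀) := by
      rw [← integral_sub hF_int ((integrable_pdf0_shift μ₀).const_mul q)]
      congr 1 with x
      rw [hF]; ring
    rw [this, integral_const_mul, integral_pdf0_shift μ₀, mul_one]
  -- decompose ∫ F' μ₀
  have hdecomp : ∫ x : ℝ, F' μ₀ x
      = (∫ x : ℝ, (f x - q) * ((x - wbar) * pdf0 (x - μ₀)))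
        + (wbar - μ₀) * g μ₀ := by
    have hptwise : ∀ x : ℝ, F' μ₀ x
        = (f x - q) * ((x - wbar) * pdf0 (x - μ₀))
          + (wbar - μ₀) * ((f x - q) * pdf0 (x - μ₀))
          + q * ((x - μ₀) * pdf0 (x - μ₀)) := by
      intro x; rw [hF']; ring
    calc ∫ x : ℝ, F' μ₀ x
        = ∫ x : ℝ, ((f x - q) * ((x - wbar) * pdf0 (x - μ₀))
          + (wbar - μ₀) * ((f x - q) * pdf0 (x - μ₀))
          + q * ((x - μ₀) * pdf0 (x - μ₀))) := by
          congr 1 with x; exact hptwise x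
      _ = (∫ x : ℝ, (f x - q) * ((x - wbar) * pdf0 (x - μ₀)))
          + (∫ x : ℝ, (wbar - μ₀) * ((f x - q) * pdf0 (x - μ₀)))
          + ∫ x : ℝ, q * ((x - μ₀) * pdf0 (x - μ₀)) := by
          have hAB : Integrable (fun x : ℝ => (f x - q) * ((x - wbar) * pdf0 (x - μ₀))
              + (wbar - μ₀) * ((f x - q) * pdf0 (x - μ₀))) := hintH.add (hint1.const_mul _)
          have hCq : Integrable (fun x : ℝ => q * ((x - μ₀) * pdf0 (x - μ₀))) :=
            hint2.const_mul _
          rw [integral_add hAB hCq, integral_add hintH (hint1.const_mul _)]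
      _ = (∫ x : ℝ, (f x - q) * ((x - wbar) * pdf0 (x - μ₀)))
          + (wbar - μ₀) * g μ₀ := by
          rw [integral_const_mul, integral_const_mul, integral_mul_pdf0_shift μ₀, mul_zero,
            add_zero, hgval]
  rw [hdecomp]
  have hH_nonneg : 0 ≤ ∫ x : ℝ, (f x - q) * ((x - wbar) * pdf0 (x - μ₀)) := by
    refine integral_nonneg fun x => ?_
    show (0:ℝ) ≤ (f x - q) * ((x - wbar) * pdf0 (x - μ₀))
    rcases le_total x wbar with hx | hx
    · have h1 : f x - q ≤ 0 := by
        have := hmono₁ x hx; rw [hfw] at this; linarith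
      have h2 : x - wbar ≤ 0 := by linarith
      rw [← mul_assoc]
      have h3 : 0 ≤ (f x - q) * (x - wbar) := by nlinarith
      exact mul_nonneg h3 (pdf0_nonneg _)
    · have h1 : 0 ≤ f x - q := by
        have := hmono₂ x hx; rw [hfw] at this; linarith
      exact mul_nonneg h1 (mul_nonneg (by linarith) (pdf0_nonneg (x - μ₀)))
  linarith
end

section
/- Suppose g : ℝ → ℝ is differentiable, g(0) = 0, and g'(μ) ≥ (w̄ − μ)·g(μ) for all μ ≥ 0, where w̄ ≤ 0. Then g(μ) ≥ 0 for all μ ≥ 0. -/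
/-- If g is differentiable, g(0) = 0, and g'(μ) ≥ (w̄ − μ)·g(μ) for all μ ≥ 0 with
w̄ ≤ 0, then g(μ) ≥ 0 for all μ ≥ 0. -/
theorem stmt4 (g : ℝ → ℝ) (wbar : ℝ) (hw : wbar ≤ 0)
    (hg : Differentiable ℝ g) (h0 : g 0 = 0)
    (hderiv : ∀ μ ≥ (0:ℝ), (wbar - μ) * g μ ≤ deriv g μ) :
    ∀ μ ≥ (0:ℝ), 0 ≤ g μ := by
  intro μ hμ
  set E : ℝ → ℝ := fun x => Real.exp (x ^ 2 / 2 - wbar * x) with hE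
  have hEdiff : Differentiable ℝ E := by
    apply Real.differentiable_exp.comp
    fun_prop
  have hEderiv : ∀ x, deriv E x = (x - wbar) * E x := by
    intro x
    have h1 : HasDerivAt (fun x : ℝ => x ^ 2 / 2 - wbar * x) (x - wbar) x := by
      have := ((hasDerivAt_pow 2 x).div_const 2).sub ((hasDerivAt_id x).const_mul wbar)
      exact this.congr_deriv (by norm_num)
    have := (h1.exp)
    rw [this.deriv]
    ring
  set h : ℝ → ℝ := fun x => g x * E x with hh
  have hhdiff : Differentiable ℝ h := hg.mul hEdiff
  have hmono : MonotoneOn h (Set.Ici (0:ℝ)) := by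
    apply monotoneOn_of_deriv_nonneg (convex_Ici 0) hhdiff.continuous.continuousOn
      (hhdiff.differentiableOn.mono interior_subset)
    intro x hx
    rw [interior_Ici] at hx
    have hx0 : (0:ℝ) ≤ x := le_of_lt hx
    rw [deriv_fun_mul (hg x) (hEdiff x), hEderiv]
    have hEpos : 0 < E x := Real.exp_pos _
    have key : (wbar - x) * g x ≤ deriv g x := hderiv x hx0
    nlinarith [Real.exp_pos (x ^ 2 / 2 - wbar * x)]
  have h0' : h 0 = 0 := by simp [hh, h0]
  have := hmono (Set.self_mem_Ici) hμ hμ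
  rw [h0'] at this
  have hEpos : 0 < E μ := Real.exp_pos _
  have : 0 ≤ g μ * E μ := this
  nlinarith
end

section
/- Let a₁, a₂ > 0 with a₁² + a₂² = 1, b ≤ 0, z > 0, and c̈ = a₁⁻¹(1 − a₂)z. For θ = (θ₁, θ₂) ∈ ℝ², let g(θ) = a₁θ₁ + a₂θ₂ + b and θ̈ = θ − a·g(θ) with a = (a₁, a₂). Define the interval [ℓ(θ), u(θ)] by ℓ(θ) = θ₁ − z if g(θ) ≤ c̈ and ℓ(θ) = θ̈₁ − a₂z if g(θ) > c̈; u(θ) = θ₁ + z if g(θ) ≤ −c̈ and u(θ) = θ̈₁ + a₂z if g(θ) > −c̈. Then 0 ∈ [ℓ(θ), u(θ)] if and only if LB(θ₂) ≤ θ₁ ≤ UB(θ₂), where LB(θ₂) = max(a₁a₂⁻¹(θ₂ + a₂⁻¹b) − a₂⁻¹z, −z) and UB(θ₂) = max(a₁a₂⁻¹(θ₂ + a₂⁻¹b) + a₂⁻¹z, z). -/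
/-- Lemma 1 (acceptance region): in the canonical two-dimensional representation,
0 ∈ [ℓ(θ), u(θ)] if and only if LB(θ₂) ≤ θ₁ ≤ UB(θ₂). -/
theorem stmt6 (a₁ a₂ b z c θ₁ θ₂ ℓ u : ℝ)
    (ha₁ : 0 < a₁) (ha₂ : 0 < a₂) (ha : a₁ ^ 2 + a₂ ^ 2 = 1)
    (hb : b ≤ 0) (hz : 0 < z) (hc : c = a₁⁻¹ * (1 - a₂) * z)
    (hℓ : ℓ = if a₁ * θ₁ + a₂ * θ₂ + b ≤ c then θ₁ - z
      else (θ₁ - a₁ * (a₁ * θ₁ + a₂ * θ₂ + b)) - a₂ * z)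
    (hu : u = if a₁ * θ₁ + a₂ * θ₂ + b ≤ -c then θ₁ + z
      else (θ₁ - a₁ * (a₁ * θ₁ + a₂ * θ₂ + b)) + a₂ * z) :
    (ℓ ≤ 0 ∧ 0 ≤ u) ↔
      (max (a₁ * a₂⁻¹ * (θ₂ + a₂⁻¹ * b) - a₂⁻¹ * z) (-z) ≤ θ₁ ∧
       θ₁ ≤ max (a₁ * a₂⁻¹ * (θ₂ + a₂⁻¹ * b) + a₂⁻¹ * z) z) := by
  have ha₂' : a₂ ≠ 0 := ne_of_gt ha₂
  have ha₁' : a₁ ≠ 0 := ne_of_gt ha₁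
  have hA2 : a₂^2 * (a₁ * a₂⁻¹ * (θ₂ + a₂⁻¹ * b) + a₂⁻¹ * z)
      = a₁*a₂*θ₂ + a₁*b + a₂*z := by field_simp
  have hB2 : a₂^2 * (a₁ * a₂⁻¹ * (θ₂ + a₂⁻¹ * b) - a₂⁻¹ * z)
      = a₁*a₂*θ₂ + a₁*b - a₂*z := by field_simp
  have hc' : a₁ * c = (1 - a₂) * z := by rw [hc]; field_simp
  have hθ : a₁^2*θ₁ + a₂^2*θ₁ = θ₁ := by linear_combination θ₁ * ha
  have hsq : (0:ℝ) < a₂^2 := by positivity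
  set A := a₁ * a₂⁻¹ * (θ₂ + a₂⁻¹ * b) + a₂⁻¹ * z with hA
  set B := a₁ * a₂⁻¹ * (θ₂ + a₂⁻¹ * b) - a₂⁻¹ * z with hB
  subst hℓ hu
  constructor
  · rintro ⟨h1, h2⟩
    constructor
    · rw [max_le_iff]
      split_ifs at h2 with h
      · -- g ≤ -c, h2 : 0 ≤ θ₁ + z
        refine ⟨?_, by linarith⟩
        have hmul : a₂^2 * B ≤ a₂^2 * θ₁ := by
          linarith [mul_le_mul_of_nonneg_left h ha₁.le, hc', hB2, hθ]
        exact le_of_mul_le_mul_left hmul hsq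
      · push_neg at h
        constructor
        · have hmul : a₂^2 * B ≤ a₂^2 * θ₁ := by linarith [hB2, hθ]
          exact le_of_mul_le_mul_left hmul hsq
        · linarith [mul_lt_mul_of_pos_left h ha₁, hc']
    · rw [le_max_iff]
      split_ifs at h1 with h
      · exact Or.inr (by linarith)
      · push_neg at h
        left
        have hmul : a₂^2 * θ₁ ≤ a₂^2 * A := by linarith [hA2, hθ]
        exact le_of_mul_le_mul_left hmul hsq
  · rintro ⟨h1, h2⟩
    rw [max_le_iff] at h1
    rw [le_max_iff] at h2
    constructor
    · split_ifs with h
      · rcases h2 with h2 | h2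
        · linarith [mul_le_mul_of_nonneg_left h2 hsq.le, hA2, hθ,
            mul_le_mul_of_nonneg_left h ha₁.le, hc']
        · linarith
      · push_neg at h
        rcases h2 with h2 | h2
        · linarith [mul_le_mul_of_nonneg_left h2 hsq.le, hA2, hθ]
        · linarith [mul_lt_mul_of_pos_left h ha₁, hc']
    · split_ifs with h
      · linarith [h1.2]
      · push_neg at h
        linarith [mul_le_mul_of_nonneg_left h1.1 hsq.le, hB2, hθ]
end

section
/- Let θ̂ ~ N(0, I₂) in ℝ², let a = (a₁, a₂) with a₁, a₂ > 0 and a₁² + a₂² = 1, b = 0, and z = z_{1−α/2}. Let x = √((1−a₂)/2), y = √((1+a₂)/2), and Ω = [[x, y],[y, −x]], Z = Ω·θ̂. Define the acceptance region A = {θ : max(a₁a₂⁻¹θ₂ − a₂⁻¹z, −z) ≤ θ₁ ≤ max(a₁a₂⁻¹θ₂ + a₂⁻¹z, z)} and B = {(Z₁,Z₂) : −z ≤ x|Z₁| − y·Z₂ ≤ z}. Then θ̂ ∈ A if and only if Z ∈ B. -/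
/-- Claim 1 in the proof of Theorem 2: with Z = Ωθ̂ for the orthogonal matrix
Ω = [[x, y],[y, −x]], the event θ̂ ∈ A holds if and only if Z ∈ B. -/
theorem stmt8 (a₁ a₂ z x y θ₁ θ₂ Z₁ Z₂ : ℝ)
    (ha₁ : 0 < a₁) (ha₂ : 0 < a₂) (ha : a₁ ^ 2 + a₂ ^ 2 = 1) (hz : 0 < z)
    (hx : x = Real.sqrt ((1 - a₂) / 2)) (hy : y = Real.sqrt ((1 + a₂) / 2))
    (hZ₁ : Z₁ = x * θ₁ + y * θ₂) (hZ₂ : Z₂ = y * θ₁ - x * θ₂) :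
    (max (a₁ * a₂⁻¹ * θ₂ - a₂⁻¹ * z) (-z) ≤ θ₁ ∧
      θ₁ ≤ max (a₁ * a₂⁻¹ * θ₂ + a₂⁻¹ * z) z) ↔
    (-z ≤ x * |Z₁| - y * Z₂ ∧ x * |Z₁| - y * Z₂ ≤ z) := by
  have ha2le : a₂ ≤ 1 := by nlinarith
  have hxnn : 0 ≤ x := hx ▸ Real.sqrt_nonneg _
  have hx2 : x ^ 2 = (1 - a₂) / 2 := by
    rw [hx, Real.sq_sqrt (by linarith)]
  have hy2 : y ^ 2 = (1 + a₂) / 2 := by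
    rw [hy, Real.sq_sqrt (by linarith)]
  have hxy : x * y = a₁ / 2 := by
    rw [hx, hy, ← Real.sqrt_mul (by linarith)]
    rw [show (1 - a₂) / 2 * ((1 + a₂) / 2) = (a₁ / 2) ^ 2 by nlinarith]
    exact Real.sqrt_sq (by positivity)
  have e1 : x * Z₁ - y * Z₂ = a₁ * θ₂ - a₂ * θ₁ := by
    subst hZ₁ hZ₂
    linear_combination θ₁ * hx2 - θ₁ * hy2 + 2 * θ₂ * hxy
  have e2 : -(x * Z₁) - y * Z₂ = -θ₁ := by
    subst hZ₁ hZ₂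
    linear_combination (-θ₁) * hx2 + (-θ₁) * hy2
  have key : x * |Z₁| - y * Z₂ = max (a₁ * θ₂ - a₂ * θ₁) (-θ₁) := by
    rw [abs_eq_max_neg, mul_max_of_nonneg _ _ hxnn, ← max_sub_sub_right, mul_neg, e1, e2]
  have r1 : a₁ * a₂⁻¹ * θ₂ - a₂⁻¹ * z = (a₁ * θ₂ - z) / a₂ := by
    field_simp
  have r2 : a₁ * a₂⁻¹ * θ₂ + a₂⁻¹ * z = (a₁ * θ₂ + z) / a₂ := by
    field_simp
  rw [key, r1, r2, max_le_iff, le_max_iff, max_le_iff, le_max_iff,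
    div_le_iff₀ ha₂, le_div_iff₀ ha₂]
  constructor
  · rintro ⟨⟨h1, h2⟩, h3⟩
    exact ⟨h3.imp (fun h => by linarith) (fun h => by linarith), by linarith, by linarith⟩
  · rintro ⟨h1, h2, h3⟩
    exact ⟨⟨by linarith, by linarith⟩, h1.imp (fun h => by linarith) (fun h => by linarith)⟩
end

section
/- Let θ̂ ~ N(0, I₂), a₁, a₂ > 0 with a₁² + a₂² = 1, b = 0, z = z_{1−α/2}. With A = {θ ∈ ℝ² : max(a₁a₂⁻¹θ₂ − a₂⁻¹z, −z) ≤ θ₁ ≤ max(a₁a₂⁻¹θ₂ + a₂⁻¹z, z)}, one has P(θ̂ ∈ A) = 1 − α. -/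
open MeasureTheory ProbabilityTheory

section Stmt9Aux

open Real Set

namespace Stmt9Aux

/-- Product of two standard gaussian pdfs depends only on the sum of squares. -/
lemma gaussianPDF_mul_eq {x y u v : ℝ} (h : u ^ 2 + v ^ 2 = x ^ 2 + y ^ 2) :
    gaussianPDF 0 1 u * gaussianPDF 0 1 v = gaussianPDF 0 1 x * gaussianPDF 0 1 y := by
  unfold gaussianPDF
  rw [← ENNReal.ofReal_mul (gaussianPDFReal_nonneg _ _ _),
    ← ENNReal.ofReal_mul (gaussianPDFReal_nonneg _ _ _)]
  congr 1
  simp only [gaussianPDFReal, NNReal.coe_one, mul_one, sub_zero]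
  have key : ∀ a b : ℝ, (√(2 * π))⁻¹ * rexp (-a ^ 2 / 2) * ((√(2 * π))⁻¹ * rexp (-b ^ 2 / 2))
      = (√(2 * π))⁻¹ * (√(2 * π))⁻¹ * rexp (-(a ^ 2 + b ^ 2) / 2) := by
    intro a b
    rw [mul_mul_mul_comm, ← Real.exp_add]
    congr 1
    ring
  rw [key, key, h]

/-- The product of two standard gaussians as a density against 2D Lebesgue. -/
lemma gauss_prod_eq :
    (gaussianReal 0 1).prod (gaussianReal 0 1)
      = ((volume : Measure ℝ).prod volume).withDensity
          (fun p => gaussianPDF 0 1 p.1 * gaussianPDF 0 1 p.2) := by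
  refine Measure.prod_eq fun s t hs ht => ?_
  rw [withDensity_apply _ (hs.prod ht), ← Measure.prod_restrict,
    lintegral_prod_mul (measurable_gaussianPDF 0 1).aemeasurable
      (measurable_gaussianPDF 0 1).aemeasurable,
    gaussianReal_apply 0 one_ne_zero s, gaussianReal_apply 0 one_ne_zero t]


/-- vertical shear preserves 2D Lebesgue. -/
lemma shearY (s : ℝ) :
    MeasurePreserving (fun p : ℝ × ℝ => (p.1, p.2 + s * p.1))
      ((volume : Measure ℝ).prod volume) ((volume : Measure ℝ).prod volume) :=
  MeasurePreserving.skew_product (MeasurePreserving.id _)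
    (by fun_prop)
    (Filter.Eventually.of_forall fun x => (measurePreserving_add_right volume (s * x)).map_eq)

/-- horizontal shear preserves 2D Lebesgue. -/
lemma shearX (c : ℝ) :
    MeasurePreserving (fun p : ℝ × ℝ => (p.1 + c * p.2, p.2))
      ((volume : Measure ℝ).prod volume) ((volume : Measure ℝ).prod volume) := by
  have h := (Measure.measurePreserving_swap.comp ((shearY c).comp
      (Measure.measurePreserving_swap (μ := (volume : Measure ℝ)) (ν := volume))))
  convert h using 1
  rfl

/-- negation of the second coordinate preserves 2D Lebesgue. -/
lemma negY : MeasurePreserving (fun p : ℝ × ℝ => (p.1, -p.2))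
    ((volume : Measure ℝ).prod volume) ((volume : Measure ℝ).prod volume) := by
  have h := (MeasurePreserving.id (volume : Measure ℝ)).prod
    (Measure.measurePreserving_neg (volume : Measure ℝ))
  convert h using 1
  rfl

/-- The orthogonal involution preserves 2D Lebesgue. -/
lemma T_vol {a₁ a₂ : ℝ} (ha₁ : 0 < a₁) (ha₂ : 0 < a₂) (ha : a₁ ^ 2 + a₂ ^ 2 = 1) :
    MeasurePreserving (fun p : ℝ × ℝ => (a₂ * p.1 - a₁ * p.2, -a₁ * p.1 - a₂ * p.2))
      ((volume : Measure ℝ).prod volume) ((volume : Measure ℝ).prod volume) := by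
  set c : ℝ := a₁ / (1 + a₂) with hc
  have h2 : (1 : ℝ) + a₂ ≠ 0 := by linarith
  have h := ((negY.comp (shearX (-c))).comp (shearY a₁)).comp (shearX (-c))
  have heq : ((fun p : ℝ × ℝ => (p.1, -p.2)) ∘ (fun p : ℝ × ℝ => (p.1 + -c * p.2, p.2))
        ∘ (fun p : ℝ × ℝ => (p.1, p.2 + a₁ * p.1)) ∘ (fun p : ℝ × ℝ => (p.1 + -c * p.2, p.2)))
      = (fun p : ℝ × ℝ => (a₂ * p.1 - a₁ * p.2, -a₁ * p.1 - a₂ * p.2)) := by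
    funext p
    obtain ⟨x, y⟩ := p
    have hca : c * (1 + a₂) = a₁ := div_mul_cancel₀ _ h2
    have hac : a₁ * c = 1 - a₂ := by
      rw [hc]
      field_simp
      nlinarith [ha]
    simp only [Function.comp_apply, Prod.mk.injEq]
    constructor
    · linear_combination (-x + c * y) * hac + (-y) * hca
    · linear_combination y * hac
  rw [← heq]
  exact h


/-- negation preserves the standard gaussian. -/
lemma neg_gauss : MeasurePreserving (fun x : ℝ => -x) (gaussianReal 0 1) (gaussianReal 0 1) := by
  refine ⟨measurable_neg, ?_⟩
  have h := gaussianReal_map_const_mul (μ := 0) (v := 1) (-1)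
  have h1 : (fun x : ℝ => -1 * x) = fun x : ℝ => -x := by funext x; ring
  have h2 : (⟨(-1 : ℝ) ^ 2, sq_nonneg _⟩ : NNReal) * 1 = 1 := by
    ext; norm_num
  rw [h1] at h
  rw [h]
  congr 1
  · simp

/-- joint negation preserves the product gaussian. -/
lemma neg_prod_gauss : MeasurePreserving (fun p : ℝ × ℝ => (-p.1, -p.2))
    ((gaussianReal 0 1).prod (gaussianReal 0 1)) ((gaussianReal 0 1).prod (gaussianReal 0 1)) := by
  have h := neg_gauss.prod neg_gauss
  convert h using 1
  rfl

/-- The orthogonal involution preserves the product gaussian. -/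
lemma T_gauss {a₁ a₂ : ℝ} (ha₁ : 0 < a₁) (ha₂ : 0 < a₂) (ha : a₁ ^ 2 + a₂ ^ 2 = 1) :
    MeasurePreserving (fun p : ℝ × ℝ => (a₂ * p.1 - a₁ * p.2, -a₁ * p.1 - a₂ * p.2))
      ((gaussianReal 0 1).prod (gaussianReal 0 1)) ((gaussianReal 0 1).prod (gaussianReal 0 1)) := by
  set T : ℝ × ℝ → ℝ × ℝ := fun p => (a₂ * p.1 - a₁ * p.2, -a₁ * p.1 - a₂ * p.2) with hT
  have hTvol := T_vol ha₁ ha₂ ha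
  have hTm : Measurable T := by fun_prop
  refine ⟨hTm, ?_⟩
  ext s hs
  rw [Measure.map_apply hTm hs, gauss_prod_eq, withDensity_apply _ (hTm hs),
    withDensity_apply _ hs]
  have hfm : Measurable (fun p : ℝ × ℝ => gaussianPDF 0 1 p.1 * gaussianPDF 0 1 p.2) := by
    exact ((measurable_gaussianPDF 0 1).comp measurable_fst).mul
      ((measurable_gaussianPDF 0 1).comp measurable_snd)
  rw [← hTvol.setLIntegral_comp_preimage hs hfm]
  refine setLIntegral_congr_fun (hTm hs) (fun p _ => ?_)
  exact (gaussianPDF_mul_eq (by ring_nf; nlinarith [ha])).symm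


lemma gauss_singleton (t : ℝ) : gaussianReal 0 1 {t} = 0 :=
  gaussianReal_absolutelyContinuous 0 one_ne_zero (volume_singleton)

lemma gauss_Iio (t : ℝ) : gaussianReal 0 1 (Iio t) = gaussianReal 0 1 (Iic t) := by
  rw [← Set.Iio_union_right]
  exact (measure_congr (union_ae_eq_left_of_ae_eq_empty
    (ae_eq_empty.mpr (gauss_singleton t)))).symm

lemma gauss_Ici_neg (t : ℝ) : gaussianReal 0 1 (Ici (-t)) = gaussianReal 0 1 (Iic t) := by
  have h := neg_gauss.measure_preimage (s := Ici (-t)) measurableSet_Ici.nullMeasurableSet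
  rw [← h]
  congr 1
  ext x
  simp

lemma gauss_Iio_neg (t : ℝ) : gaussianReal 0 1 (Iio (-t)) = gaussianReal 0 1 (Ioi t) := by
  have h := neg_gauss.measure_preimage (s := Iio (-t)) measurableSet_Iio.nullMeasurableSet
  rw [← h]
  congr 1
  ext x
  simp

lemma gauss_Iic_toReal_lt_one (t : ℝ) : (gaussianReal 0 1 (Iic t)).toReal ≤ 1 := by
  have h := measure_mono (μ := gaussianReal 0 1) (subset_univ (Iic t))
  rw [measure_univ] at h
  exact ENNReal.toReal_le_of_le_ofReal (by norm_num) (by simpa using h)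

lemma gauss_Iic_zero : (gaussianReal 0 1 (Iic (0:ℝ))).toReal = 1/2 := by
  have h1 : gaussianReal 0 1 (Iic (0:ℝ)) + gaussianReal 0 1 (Ioi (0:ℝ)) = 1 := by
    rw [← measure_univ (μ := gaussianReal 0 1)]
    rw [← Iic_union_Ioi (a := (0:ℝ))]
    exact (measure_union (Iic_disjoint_Ioi le_rfl) measurableSet_Ioi).symm
  have h2 : gaussianReal 0 1 (Ioi (0:ℝ)) = gaussianReal 0 1 (Iic (0:ℝ)) := by
    rw [← gauss_Iio_neg, neg_zero, gauss_Iio]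
  rw [h2] at h1
  have hne : gaussianReal 0 1 (Iic (0:ℝ)) ≠ ⊤ := measure_ne_top _ _
  have := congrArg ENNReal.toReal h1
  rw [ENNReal.toReal_add hne hne] at this
  simp at this
  linarith

lemma z_nonneg {α z : ℝ} (hα : α ∈ Set.Icc (0:ℝ) 1) (hz : stdNormalCDF z = 1 - α / 2) :
    0 ≤ z := by
  by_contra hlt
  push_neg at hlt
  have hsub : gaussianReal 0 1 (Iic z) + gaussianReal 0 1 (Ioc z 0) = gaussianReal 0 1 (Iic 0) := by
    rw [← measure_union (by exact Set.Iic_disjoint_Ioc le_rfl) measurableSet_Ioc,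
      Iic_union_Ioc_eq_Iic hlt.le]
  have hpos : gaussianReal 0 1 (Ioc z 0) ≠ 0 := by
    intro h0
    have := gaussianReal_absolutelyContinuous' 0 one_ne_zero h0
    rw [Real.volume_Ioc] at this
    simp only [ENNReal.ofReal_eq_zero] at this
    linarith
  have h1 : (gaussianReal 0 1 (Iic z)).toReal + (gaussianReal 0 1 (Ioc z 0)).toReal = 1/2 := by
    rw [← ENNReal.toReal_add (measure_ne_top _ _) (measure_ne_top _ _), hsub, gauss_Iic_zero]
  have h2 : 0 < (gaussianReal 0 1 (Ioc z 0)).toReal :=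
    ENNReal.toReal_pos hpos (measure_ne_top _ _)
  have h3 : (gaussianReal 0 1 (Iic z)).toReal = 1 - α / 2 := hz
  have := hα.2
  linarith


end Stmt9Aux

end Stmt9Aux

open Set Stmt9Aux

/-- Exact coverage of the IICI acceptance region when the inequality binds (b = 0):
P(θ̂ ∈ A) = 1 − α for θ̂ ~ N(0, I₂). -/
theorem stmt9 (a₁ a₂ α z : ℝ)
    (ha₁ : 0 < a₁) (ha₂ : 0 < a₂) (ha : a₁ ^ 2 + a₂ ^ 2 = 1)
    (hα : α ∈ Set.Icc (0:ℝ) 1) (hz : stdNormalCDF z = 1 - α / 2) :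
    (((gaussianReal 0 1).prod (gaussianReal 0 1))
      {θ : ℝ × ℝ | max (a₁ * a₂⁻¹ * θ.2 - a₂⁻¹ * z) (-z) ≤ θ.1 ∧
        θ.1 ≤ max (a₁ * a₂⁻¹ * θ.2 + a₂⁻¹ * z) z}).toReal = 1 - α := by
  have hz0 : 0 ≤ z := z_nonneg hα hz
  set γ : Measure ℝ := gaussianReal 0 1 with hγ
  set μ2 : Measure (ℝ × ℝ) := γ.prod γ with hμ2
  set v : ℝ × ℝ → ℝ := fun p => a₂ * p.1 - a₁ * p.2 with hvdef
  have hvm : Measurable v := by fun_prop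
  -- the five pieces
  set A : Set (ℝ × ℝ) := {p | (-z ≤ p.1 ∧ -z ≤ v p) ∧ (p.1 ≤ z ∨ v p ≤ z)} with hAdef
  set C : Set (ℝ × ℝ) := {p | z < p.1 ∧ z < v p} with hCdef
  set E₁ : Set (ℝ × ℝ) := {p | -z ≤ p.1 ∧ v p < -z} with hE₁def
  set D : Set (ℝ × ℝ) := {p | p.1 < -z ∧ v p < -z} with hDdef
  set E₂ : Set (ℝ × ℝ) := {p | p.1 < -z ∧ -z ≤ v p} with hE₂def
  have hu : Measurable (fun p : ℝ × ℝ => p.1) := measurable_fst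
  have hAm : MeasurableSet A :=
    (((measurableSet_le measurable_const hu).inter (measurableSet_le measurable_const hvm)).inter
      ((measurableSet_le hu measurable_const).union (measurableSet_le hvm measurable_const)))
  have hCm : MeasurableSet C :=
    (measurableSet_lt measurable_const hu).inter (measurableSet_lt measurable_const hvm)
  have hE₁m : MeasurableSet E₁ :=
    (measurableSet_le measurable_const hu).inter (measurableSet_lt hvm measurable_const)
  have hDm : MeasurableSet D :=
    (measurableSet_lt hu measurable_const).inter (measurableSet_lt hvm measurable_const)
  have hE₂m : MeasurableSet E₂ :=
    (measurableSet_lt hu measurable_const).inter (measurableSet_le measurable_const hvm)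
  -- the target set equals A
  have hset : {θ : ℝ × ℝ | max (a₁ * a₂⁻¹ * θ.2 - a₂⁻¹ * z) (-z) ≤ θ.1 ∧
      θ.1 ≤ max (a₁ * a₂⁻¹ * θ.2 + a₂⁻¹ * z) z} = A := by
    have key1 : ∀ x y : ℝ, (a₁ * a₂⁻¹ * y - a₂⁻¹ * z ≤ x) ↔ (-z ≤ a₂ * x - a₁ * y) := by
      intro x y
      rw [show a₁ * a₂⁻¹ * y - a₂⁻¹ * z = (a₁ * y - z) / a₂ by field_simp,
        div_le_iff₀ ha₂]
      constructor <;> intro h <;> linarith [mul_comm x a₂]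
    have key2 : ∀ x y : ℝ, (x ≤ a₁ * a₂⁻¹ * y + a₂⁻¹ * z) ↔ (a₂ * x - a₁ * y ≤ z) := by
      intro x y
      rw [show a₁ * a₂⁻¹ * y + a₂⁻¹ * z = (a₁ * y + z) / a₂ by field_simp,
        le_div_iff₀ ha₂]
      constructor <;> intro h <;> linarith [mul_comm x a₂]
    ext p
    obtain ⟨x, y⟩ := p
    simp only [hAdef, hvdef, mem_setOf_eq, max_le_iff, le_max_iff, key1, key2]
    tauto
  rw [hset]
  -- partitions
  have hpart1 : μ2 {p : ℝ × ℝ | -z ≤ p.1} = μ2 A + μ2 C + μ2 E₁ := by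
    have hU : {p : ℝ × ℝ | -z ≤ p.1} = (A ∪ C) ∪ E₁ := by
      ext p
      simp only [hAdef, hCdef, hE₁def, mem_setOf_eq, mem_union]
      constructor
      · intro h
        by_cases h1 : v p < -z
        · exact Or.inr ⟨h, h1⟩
        push_neg at h1
        by_cases h2 : p.1 ≤ z ∨ v p ≤ z
        · exact Or.inl (Or.inl ⟨⟨h, h1⟩, h2⟩)
        push_neg at h2
        exact Or.inl (Or.inr ⟨h2.1, h2.2⟩)
      · rintro ((⟨⟨h, _⟩, _⟩ | ⟨h1, _⟩) | ⟨h, _⟩) <;> linarith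
    have hd1 : Disjoint (A ∪ C) E₁ := by
      rw [Set.disjoint_left]
      rintro p (⟨⟨_, h⟩, _⟩ | ⟨_, h⟩) ⟨_, h'⟩ <;> linarith
    have hd2 : Disjoint A C := by
      rw [Set.disjoint_left]
      rintro p ⟨_, (h | h)⟩ ⟨h1, h2⟩ <;> linarith
    rw [hU, measure_union hd1 hE₁m, measure_union hd2 hCm]
  have hpart2 : μ2 {p : ℝ × ℝ | p.1 < -z} = μ2 D + μ2 E₂ := by
    have hU : {p : ℝ × ℝ | p.1 < -z} = D ∪ E₂ := by
      ext p
      simp only [hDdef, hE₂def, mem_setOf_eq, mem_union]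
      constructor
      · intro h
        rcases lt_or_ge (v p) (-z) with h1 | h1
        · exact Or.inl ⟨h, h1⟩
        · exact Or.inr ⟨h, h1⟩
      · rintro (⟨h, _⟩ | ⟨h, _⟩) <;> exact h
    have hd : Disjoint D E₂ := by
      rw [Set.disjoint_left]
      rintro p ⟨_, h⟩ ⟨_, h'⟩
      linarith
    rw [hU, measure_union hd hE₂m]
  -- symmetry identifications
  have hCD : μ2 D = μ2 C := by
    have h := neg_prod_gauss.measure_preimage (s := C) hCm.nullMeasurableSet
    rw [← h]
    congr 1
    ext p
    simp only [hCdef, hDdef, hvdef, mem_preimage, mem_setOf_eq]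
    constructor <;> rintro ⟨h1, h2⟩ <;> constructor <;> linarith
  have hE : μ2 E₂ = μ2 E₁ := by
    have h := (T_gauss ha₁ ha₂ ha).measure_preimage (s := E₁) hE₁m.nullMeasurableSet
    rw [← h]
    congr 1
    ext p
    simp only [hE₁def, hE₂def, hvdef, mem_preimage, mem_setOf_eq]
    have hkey : a₂ * (a₂ * p.1 - a₁ * p.2) - a₁ * (-a₁ * p.1 - a₂ * p.2) = p.1 := by
      linear_combination p.1 * ha
    rw [hkey]
    tauto
  -- marginal values
  have hM1 : μ2 {p : ℝ × ℝ | -z ≤ p.1} = γ (Iic z) := by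
    have : {p : ℝ × ℝ | -z ≤ p.1} = (Ici (-z)) ×ˢ (univ : Set ℝ) := by
      ext p; simp [Set.mem_prod]
    rw [this, Measure.prod_prod, measure_univ, mul_one, hγ, gauss_Ici_neg]
  have hM2 : μ2 {p : ℝ × ℝ | p.1 < -z} = γ (Ioi z) := by
    have : {p : ℝ × ℝ | p.1 < -z} = (Iio (-z)) ×ˢ (univ : Set ℝ) := by
      ext p; simp [Set.mem_prod]
    rw [this, Measure.prod_prod, measure_univ, mul_one, hγ, gauss_Iio_neg]
  -- put it together
  have hΦ : (γ (Iic z)).toReal = 1 - α / 2 := hz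
  have hIoi : (γ (Ioi z)).toReal = α / 2 := by
    have hcompl : γ (Ioi z) = 1 - γ (Iic z) := by
      rw [← Set.compl_Iic]
      exact prob_compl_eq_one_sub measurableSet_Iic
    rw [hcompl, ENNReal.toReal_sub_of_le (prob_le_one) (by norm_num), hΦ]
    norm_num
  have hne : ∀ s : Set (ℝ × ℝ), μ2 s ≠ ⊤ := fun s => measure_ne_top _ _
  have hkey : μ2 A + (μ2 C + μ2 E₁) = γ (Iic z) := by
    rw [← hM1, hpart1, add_assoc]
  have hkey2 : μ2 C + μ2 E₁ = γ (Ioi z) := by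
    rw [← hM2, hpart2, hCD, hE]
  rw [hkey2] at hkey
  have := congrArg ENNReal.toReal hkey
  rw [ENNReal.toReal_add (hne A) (measure_ne_top _ _), hΦ, hIoi] at this
  linarith
end

section
/- Let a₁, a₂ > 0 with a₁² + a₂² = 1, z = z_{1−α/2} > 0, and define f : ℝ → ℝ by f(w) = Φ(max(−a₁a₂⁻¹w + a₂⁻¹z, z)) − Φ(max(−a₁a₂⁻¹w − a₂⁻¹z, −z)), where Φ is the standard normal CDF. Then: (i) f(w) = 1 − α for all w ≥ c̈ := a₁⁻¹(1 − a₂)z; (ii) f(w) ≥ 1 − α for w ∈ [−c̈, c̈]; (iii) f is nondecreasing on (−∞, −c̈); and (iv) lim_{w→−∞} f(w) = 0. Consequently, there exists w̄ < −c̈ with f(w̄) = 1 − α such that f is nondecreasing through w̄. -/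
open MeasureTheory ProbabilityTheory
open scoped ENNReal NNReal

namespace Stmt10Aux

noncomputable abbrev pdf : ℝ → ℝ := gaussianPDFReal 0 1

lemma pdf_cont : Continuous pdf := by
  unfold pdf gaussianPDFReal
  fun_prop

lemma pdf_int : Integrable pdf := integrable_gaussianPDFReal 0 1

lemma pdf_nonneg (x : ℝ) : 0 ≤ pdf x := gaussianPDFReal_nonneg 0 1 x

lemma pdf_pos (x : ℝ) : 0 < pdf x := gaussianPDFReal_pos 0 1 x one_ne_zero

lemma pdf_even (x : ℝ) : pdf (-x) = pdf x := by
  simp [pdf, gaussianPDFReal, neg_sq]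

lemma pdf_le {x y : ℝ} (h : x ^ 2 ≤ y ^ 2) : pdf y ≤ pdf x := by
  simp only [pdf, gaussianPDFReal, sub_zero, NNReal.coe_one, mul_one]
  have h2 : Real.exp (-y ^ 2 / 2) ≤ Real.exp (-x ^ 2 / 2) :=
    Real.exp_le_exp.mpr (by linarith)
  have h3 : (0:ℝ) ≤ (Real.sqrt (2 * Real.pi))⁻¹ := by positivity
  exact mul_le_mul_of_nonneg_left h2 h3

lemma Phi_eq (t : ℝ) : stdNormalCDF t = ∫ x in Set.Iic t, pdf x := by
  rw [stdNormalCDF, gaussianReal_apply_eq_integral 0 one_ne_zero,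
    ENNReal.toReal_ofReal]
  exact setIntegral_nonneg measurableSet_Iic fun x _ => pdf_nonneg x

lemma Phi_sub (a b : ℝ) : stdNormalCDF b - stdNormalCDF a = ∫ x in a..b, pdf x := by
  rw [Phi_eq, Phi_eq]
  exact intervalIntegral.integral_Iic_sub_Iic pdf_int.integrableOn pdf_int.integrableOn

lemma Phi_mono : Monotone stdNormalCDF := by
  intro a b hab
  have h := Phi_sub a b
  have h2 : 0 ≤ ∫ x in a..b, pdf x :=
    intervalIntegral.integral_nonneg hab fun x _ => pdf_nonneg x
  linarith

lemma Phi_strict {a b : ℝ} (hab : a < b) : stdNormalCDF a < stdNormalCDF b := by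
  have h := Phi_sub a b
  have h2 : 0 < ∫ x in a..b, pdf x :=
    intervalIntegral.intervalIntegral_pos_of_pos
      (pdf_cont.intervalIntegrable a b) pdf_pos hab
  linarith

lemma Phi_neg (t : ℝ) : stdNormalCDF (-t) = 1 - stdNormalCDF t := by
  have h1 : (∫ x in Set.Iic (-t), pdf (-x)) = ∫ x in Set.Ioi t, pdf x := by
    simpa using integral_comp_neg_Iic (-t) pdf
  have h2 : (∫ x in Set.Iic t, pdf x) + ∫ x in Set.Ioi t, pdf x = ∫ x, pdf x :=
    intervalIntegral.integral_Iic_add_Ioi pdf_int.integrableOn pdf_int.integrableOn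
  have h3 : (∫ x, pdf x) = 1 := integral_gaussianPDFReal_eq_one 0 one_ne_zero
  have h4 : (∫ x in Set.Iic (-t), pdf (-x)) = ∫ x in Set.Iic (-t), pdf x := by
    simp_rw [pdf_even]
  rw [Phi_eq, Phi_eq, ← h4, h1]
  linarith

lemma Phi_cont : Continuous stdNormalCDF := by
  have h : Continuous fun t : ℝ => stdNormalCDF 0 + ∫ x in (0:ℝ)..t, pdf x :=
    continuous_const.add (pdf_int.continuous_primitive 0)
  have : (fun t : ℝ => stdNormalCDF 0 + ∫ x in (0:ℝ)..t, pdf x) = stdNormalCDF := by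
    funext t
    have := Phi_sub 0 t
    linarith
  rwa [this] at h

lemma Phi_atTop : Filter.Tendsto stdNormalCDF Filter.atTop (nhds 1) := by
  have h := tendsto_measure_Iic_atTop (gaussianReal 0 1)
  rw [measure_univ] at h
  have h2 : Filter.Tendsto (fun x => ((gaussianReal 0 1) (Set.Iic x)).toReal)
      Filter.atTop (nhds (1 : ℝ≥0∞).toReal) :=
    (ENNReal.tendsto_toReal (by simp)).comp h
  exact (by simpa using h2 : Filter.Tendsto (fun x => ((gaussianReal 0 1) (Set.Iic x)).toReal) Filter.atTop (nhds 1))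

lemma key {b u₁ u₂ : ℝ} (hb : 0 < b) (hu₂ : 0 ≤ u₂) (h : u₂ ≤ u₁) :
    stdNormalCDF (u₁ + b) - stdNormalCDF (u₁ - b)
      ≤ stdNormalCDF (u₂ + b) - stdNormalCDF (u₂ - b) := by
  have e1 := Phi_sub (u₂ + b) (u₁ + b)
  have e2 := Phi_sub (u₂ - b) (u₁ - b)
  have hshift : (∫ x in (u₂ + b)..(u₁ + b), pdf x)
      = ∫ x in (u₂ - b)..(u₁ - b), pdf (x + 2 * b) := by
    rw [intervalIntegral.integral_comp_add_right]
    congr 1 <;> ring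
  have hmono : (∫ x in (u₂ - b)..(u₁ - b), pdf (x + 2 * b))
      ≤ ∫ x in (u₂ - b)..(u₁ - b), pdf x := by
    apply intervalIntegral.integral_mono_on (by linarith)
      ((pdf_cont.comp (continuous_id.add continuous_const)).intervalIntegrable _ _)
      (pdf_cont.intervalIntegrable _ _)
    intro x hx
    refine pdf_le ?_
    have hx1 : u₂ - b ≤ x := hx.1
    simp only [Pi.add_apply, id_eq]
    nlinarith [mul_nonneg hb.le (by linarith : (0:ℝ) ≤ x + b)]
  rw [hshift] at e1
  linarith

end Stmt10Aux

open Stmt10Aux in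
/-- Properties of f(w) = Φ(max(−a₁a₂⁻¹w + a₂⁻¹z, z)) − Φ(max(−a₁a₂⁻¹w − a₂⁻¹z, −z)):
(i) f(w) = 1 − α for w ≥ c̈; (ii) f(w) ≥ 1 − α on [−c̈, c̈]; (iii) f nondecreasing on
(−∞, −c̈); (iv) f(w) → 0 as w → −∞; hence there is w̄ < −c̈ with f(w̄) = 1 − α and f
nondecreasing through w̄. -/
theorem stmt10 (a₁ a₂ α z c : ℝ) (f : ℝ → ℝ)
    (ha₁ : 0 < a₁) (ha₂ : 0 < a₂) (ha : a₁ ^ 2 + a₂ ^ 2 = 1)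
    (hα : α ∈ Set.Icc (0:ℝ) 1) (hzpos : 0 < z)
    (hz : stdNormalCDF z = 1 - α / 2)
    (hc : c = a₁⁻¹ * (1 - a₂) * z)
    (hf : ∀ w, f w = stdNormalCDF (max (-(a₁ * a₂⁻¹) * w + a₂⁻¹ * z) z)
      - stdNormalCDF (max (-(a₁ * a₂⁻¹) * w - a₂⁻¹ * z) (-z))) :
    (∀ w, c ≤ w → f w = 1 - α) ∧
    (∀ w ∈ Set.Icc (-c) c, 1 - α ≤ f w) ∧
    MonotoneOn f (Set.Iio (-c)) ∧
    Filter.Tendsto f Filter.atBot (nhds 0) ∧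
    ∃ wbar < -c, f wbar = 1 - α ∧
      (∀ w ≤ wbar, f w ≤ f wbar) ∧ (∀ w, wbar ≤ w → f wbar ≤ f w) := by
  have ha₂1 : a₂ < 1 := by nlinarith
  have hk : 0 < a₁ * a₂⁻¹ := by positivity
  have hcpos : 0 < c := by
    rw [hc]
    have h1 : 0 < 1 - a₂ := by linarith
    positivity
  have hinv : 1 < a₂⁻¹ := (one_lt_inv₀ ha₂).2 ha₂1
  have hbz : z < a₂⁻¹ * z := by nlinarith
  have hK : a₁ * a₂⁻¹ * c = a₂⁻¹ * z - z := by
    rw [hc]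
    field_simp
  have hPhinegz : stdNormalCDF (-z) = α / 2 := by rw [Phi_neg, hz]; ring
  -- branch lemmas
  have m1_high : ∀ w, c ≤ w → max (-(a₁ * a₂⁻¹) * w + a₂⁻¹ * z) z = z := by
    intro w hw
    apply max_eq_right
    nlinarith [mul_le_mul_of_nonneg_left hw hk.le]
  have m1_low : ∀ w, w ≤ c → max (-(a₁ * a₂⁻¹) * w + a₂⁻¹ * z) z
      = -(a₁ * a₂⁻¹) * w + a₂⁻¹ * z := by
    intro w hw
    apply max_eq_left
    nlinarith [mul_le_mul_of_nonneg_left hw hk.le]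
  have m2_high : ∀ w, -c ≤ w → max (-(a₁ * a₂⁻¹) * w - a₂⁻¹ * z) (-z) = -z := by
    intro w hw
    apply max_eq_right
    nlinarith [mul_le_mul_of_nonneg_left hw hk.le]
  have m2_low : ∀ w, w ≤ -c → max (-(a₁ * a₂⁻¹) * w - a₂⁻¹ * z) (-z)
      = -(a₁ * a₂⁻¹) * w - a₂⁻¹ * z := by
    intro w hw
    apply max_eq_left
    nlinarith [mul_le_mul_of_nonneg_left hw hk.le]
  -- part (i)
  have part1 : ∀ w, c ≤ w → f w = 1 - α := by
    intro w hw
    rw [hf, m1_high w hw, m2_high w (by linarith), hz, hPhinegz]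
    ring
  -- part (ii)
  have part2 : ∀ w ∈ Set.Icc (-c) c, 1 - α ≤ f w := by
    rintro w ⟨h1, h2⟩
    rw [hf, m1_low w h2, m2_high w h1, hPhinegz]
    have : stdNormalCDF z ≤ stdNormalCDF (-(a₁ * a₂⁻¹) * w + a₂⁻¹ * z) := by
      apply Phi_mono
      nlinarith [mul_le_mul_of_nonneg_left h2 hk.le]
    linarith
  -- part (iii)
  have part3 : MonotoneOn f (Set.Iio (-c)) := by
    intro w₁ h1 w₂ h2 h12
    simp only [Set.mem_Iio] at h1 h2
    rw [hf, hf, m1_low w₁ (by linarith), m2_low w₁ (by linarith),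
      m1_low w₂ (by linarith), m2_low w₂ (by linarith)]
    have hu₂ : 0 ≤ -(a₁ * a₂⁻¹) * w₂ := by nlinarith
    have hle : -(a₁ * a₂⁻¹) * w₂ ≤ -(a₁ * a₂⁻¹) * w₁ := by nlinarith
    exact key (by positivity) hu₂ hle
  -- part (iv)
  have part4 : Filter.Tendsto f Filter.atBot (nhds 0) := by
    have hlin : Filter.Tendsto (fun w : ℝ => -(a₁ * a₂⁻¹) * w) Filter.atBot Filter.atTop := by
      have h := (Filter.tendsto_neg_atBot_atTop (G := ℝ)).const_mul_atTop hk
      refine h.congr fun w => by ring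
    have ht1 : Filter.Tendsto (fun w : ℝ => stdNormalCDF (-(a₁ * a₂⁻¹) * w + a₂⁻¹ * z))
        Filter.atBot (nhds 1) :=
      Phi_atTop.comp (Filter.tendsto_atTop_add_const_right _ _ hlin)
    have ht2 : Filter.Tendsto (fun w : ℝ => stdNormalCDF (-(a₁ * a₂⁻¹) * w - a₂⁻¹ * z))
        Filter.atBot (nhds 1) := by
      have := Phi_atTop.comp (Filter.tendsto_atTop_add_const_right Filter.atBot (-(a₂⁻¹ * z)) hlin)
      refine this.congr fun w => by rw [Function.comp]; ring_nf
    have ht : Filter.Tendsto (fun w : ℝ => stdNormalCDF (-(a₁ * a₂⁻¹) * w + a₂⁻¹ * z)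
        - stdNormalCDF (-(a₁ * a₂⁻¹) * w - a₂⁻¹ * z)) Filter.atBot (nhds 0) := by
      have := ht1.sub ht2
      simpa using this
    refine ht.congr' ?_
    filter_upwards [Filter.eventually_lt_atBot (-c)] with w hw
    rw [hf, m1_low w (by linarith), m2_low w (by linarith)]
  -- part (v)
  refine ⟨part1, part2, part3, part4, ?_⟩
  have hfc : Continuous f := by
    have hfe : f = fun w => stdNormalCDF (max (-(a₁ * a₂⁻¹) * w + a₂⁻¹ * z) z)
        - stdNormalCDF (max (-(a₁ * a₂⁻¹) * w - a₂⁻¹ * z) (-z)) := funext hf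
    rw [hfe]
    have hl1 : Continuous fun w : ℝ => -(a₁ * a₂⁻¹) * w + a₂⁻¹ * z :=
      (continuous_const.mul continuous_id).add continuous_const
    have hl2 : Continuous fun w : ℝ => -(a₁ * a₂⁻¹) * w - a₂⁻¹ * z :=
      (continuous_const.mul continuous_id).sub continuous_const
    exact (Phi_cont.comp (hl1.max continuous_const)).sub
      (Phi_cont.comp (hl2.max continuous_const))
  have hΦ0 : stdNormalCDF 0 = 1 / 2 := by
    have := Phi_neg 0
    rw [neg_zero] at this
    linarith
  have hα1 : α < 1 := by
    have := Phi_strict hzpos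
    rw [hΦ0, hz] at this
    linarith
  -- f (-c) > 1 - α
  have hfc_gt : 1 - α < f (-c) := by
    rw [hf, m1_low (-c) (by linarith), m2_high (-c) le_rfl, hPhinegz]
    have harg : z < -(a₁ * a₂⁻¹) * (-c) + a₂⁻¹ * z := by nlinarith
    have := Phi_strict harg
    rw [hz] at this
    linarith
  -- pick w₀ far left
  obtain ⟨w₀, hw₀1, hw₀2⟩ : ∃ w₀, f w₀ < 1 - α ∧ w₀ < -c := by
    have h1 := part4.eventually_lt_const (by linarith : (0:ℝ) < 1 - α)
    exact (h1.and (Filter.eventually_lt_atBot (-c))).exists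
  -- IVT
  obtain ⟨wbar, hwmem, hwf⟩ : ∃ wbar ∈ Set.Icc w₀ (-c), f wbar = 1 - α := by
    have hsub := intermediate_value_Icc hw₀2.le hfc.continuousOn
    have hmem : (1 - α) ∈ Set.Icc (f w₀) (f (-c)) := ⟨hw₀1.le, hfc_gt.le⟩
    obtain ⟨wbar, h1, h2⟩ := hsub hmem
    exact ⟨wbar, h1, h2⟩
  have hwlt : wbar < -c := by
    rcases lt_or_eq_of_le hwmem.2 with h | h
    · exact h
    · rw [h] at hwf; linarith
  refine ⟨wbar, hwlt, hwf, ?_, ?_⟩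
  · intro w hw
    exact part3 (by simp only [Set.mem_Iio]; linarith) (by simpa using hwlt) hw
  · intro w hw
    rw [hwf]
    by_cases hwc : w < -c
    · have := part3 (by simpa using hwlt) (by simpa using hwc) hw
      rw [hwf] at this
      exact this
    · push_neg at hwc
      by_cases hwc2 : w ≤ c
      · exact part2 w ⟨hwc, hwc2⟩
      · rw [part1 w (by linarith)]
end

section
/- Let θ̂ ~ N(0, I₂), let a₂ ∈ (0,1), a₁ = √(1 − a₂²), z = z_{1−α/2}, c̈ = a₁⁻¹(1 − a₂)z, and define the IICI upper bound u(θ̂) = θ̂₁ + z if a₁θ̂₁ + a₂θ̂₂ ≤ −c̈ and u(θ̂) = a₂²θ̂₁ − a₁a₂θ̂₂ + a₂z otherwise, and lower bound ℓ(θ̂) = θ̂₁ − z if a₁θ̂₁ + a₂θ̂₂ ≤ c̈ and ℓ(θ̂) = a₂²θ̂₁ − a₁a₂θ̂₂ − a₂z otherwise. Then ℓ(θ̂) ≤ u(θ̂) always, and u(θ̂) − ℓ(θ̂) ≤ 2z, i.e., the IICI is a nonempty interval never longer than the usual confidence interval. -/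
/-- The canonical IICI is a nonempty interval never longer than the usual confidence
interval: ℓ(θ̂) ≤ u(θ̂) and u(θ̂) − ℓ(θ̂) ≤ 2z, for every realization θ̂ ∈ ℝ². -/
theorem stmt17 (a₂ a₁ z c θ₁ θ₂ ℓ u : ℝ)
    (ha₂ : a₂ ∈ Set.Ioo (0:ℝ) 1)
    (ha₁ : a₁ = Real.sqrt (1 - a₂ ^ 2))
    (hz : 0 < z) (hc : c = a₁⁻¹ * (1 - a₂) * z)
    (hℓ : ℓ = if a₁ * θ₁ + a₂ * θ₂ ≤ c then θ₁ - z
      else a₂ ^ 2 * θ₁ - a₁ * a₂ * θ₂ - a₂ * z)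
    (hu : u = if a₁ * θ₁ + a₂ * θ₂ ≤ -c then θ₁ + z
      else a₂ ^ 2 * θ₁ - a₁ * a₂ * θ₂ + a₂ * z) :
    ℓ ≤ u ∧ u - ℓ ≤ 2 * z := by
  obtain ⟨h0, h1⟩ := ha₂
  have hpos : (0:ℝ) < 1 - a₂ ^ 2 := by nlinarith
  have ha1 : 0 < a₁ := ha₁ ▸ Real.sqrt_pos.mpr hpos
  have hsq : a₁ ^ 2 = 1 - a₂ ^ 2 := by rw [ha₁, Real.sq_sqrt hpos.le]
  have hac : a₁ * c = (1 - a₂) * z := by rw [hc]; field_simp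
  have hcpos : 0 ≤ c := by nlinarith
  subst hℓ hu
  split_ifs with h1' h2' h3'
  · constructor <;> nlinarith
  · have hg : a₁ ^ 2 * θ₁ + a₁ * a₂ * θ₂ ≤ (1 - a₂) * z := by
      nlinarith [mul_le_mul_of_nonneg_left h1' ha1.le]
    have hg2 : -((1 - a₂) * z) ≤ a₁ ^ 2 * θ₁ + a₁ * a₂ * θ₂ := by
      nlinarith [mul_le_mul_of_nonneg_left (le_of_not_ge h2') ha1.le]
    have key : a₂ ^ 2 * θ₁ - a₁ * a₂ * θ₂ = θ₁ - (a₁ ^ 2 * θ₁ + a₁ * a₂ * θ₂) := by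
      linear_combination θ₁ * hsq
    have haz : 0 < a₂ * z := mul_pos h0 hz
    constructor <;> (rw [key]; linarith)
  · exact absurd (h3'.trans (by linarith)) h1'
  · constructor <;> nlinarith
end
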